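/- (Sufficient condition for the reduced Jacobian to be Hurwitz) Let each load function Q_i be differentiable with dQ_i/dE_i(E_{L,i}) ≤ 0 at a solution E_L ∈ ℝ^n_{>0} of the reduced power flow equation 0 = Q_L(E_L) + [E_L]B_red(E_L − E_L*). If the matrix [E_L]^{−2}[Q_L(E_L)] − B_red is positive definite (i.e., B_red ≺ [E_L]^{−2}[Q_L(E_L)]), then the reduced Jacobian J_red(E_L) = (∂Q_L/∂E_L)(E_L) + [E_L]B_red + [B_red(E_L − E_L*)] is Hurwitz. -/

import Mathlib

open Matrix
open scoped ComplexOrder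

section helpers

variable {n : ℕ}

lemma symm_dot (P : Matrix (Fin n) (Fin n) ℝ) (hP : P.IsSymm) (x y : Fin n → ℝ) :
    x ⬝ᵥ P *ᵥ y = y ⬝ᵥ P *ᵥ x := by
  simp only [dotProduct, mulVec, Finset.mul_sum]
  rw [Finset.sum_comm]
  refine Finset.sum_congr rfl fun i _ => Finset.sum_congr rfl fun j _ => ?_
  rw [← hP.apply i j]
  ring

lemma quad_eq (P : Matrix (Fin n) (Fin n) ℝ) (v : Fin n → ℂ) :
    star v ⬝ᵥ (P.map Complex.ofReal) *ᵥ v =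
      Complex.ofReal ((fun i => (v i).re) ⬝ᵥ P *ᵥ (fun i => (v i).re)
        + (fun i => (v i).im) ⬝ᵥ P *ᵥ (fun i => (v i).im))
      + Complex.I * Complex.ofReal ((fun i => (v i).re) ⬝ᵥ P *ᵥ (fun i => (v i).im)
        - (fun i => (v i).im) ⬝ᵥ P *ᵥ (fun i => (v i).re)) := by
  apply Complex.ext <;>
  · simp only [dotProduct, mulVec, map_apply, Pi.star_apply, Complex.re_sum, Complex.im_sum,
      Complex.mul_re, Complex.mul_im, Complex.ofReal_re, Complex.ofReal_im,
      Complex.add_re, Complex.add_im, Complex.I_re, Complex.I_im,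
      Complex.conj_re, Complex.conj_im, RCLike.star_def, Finset.mul_sum, mul_add, mul_sub,
      neg_mul, mul_zero, zero_mul, add_zero, zero_add, sub_zero, zero_sub, one_mul, mul_one,
      Finset.sum_add_distrib, Finset.sum_sub_distrib, Finset.sum_neg_distrib]
    ring_nf

lemma posDef_map_ofReal {P : Matrix (Fin n) (Fin n) ℝ} (hP : P.PosDef) :
    (P.map Complex.ofReal).PosDef := by
  have hsymm : P.IsSymm := hP.isHermitian
  refine Matrix.PosDef.of_dotProduct_mulVec_pos
    (hP.isHermitian.map Complex.ofReal (fun x => (Complex.conj_ofReal x).symm)) ?_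
  intro v hv
  set x : Fin n → ℝ := fun i => (v i).re with hx
  set y : Fin n → ℝ := fun i => (v i).im with hy
  have key := quad_eq P v
  rw [symm_dot P hsymm x y] at key
  rw [← hx, ← hy] at key
  simp only [sub_self, Complex.ofReal_zero, mul_zero, add_zero] at key
  rw [key]
  rw [Complex.zero_lt_real]
  have hxy : x ≠ 0 ∨ y ≠ 0 := by
    by_contra h
    push_neg at h
    apply hv
    funext i
    exact Complex.ext (congrFun h.1 i) (congrFun h.2 i)
  have hxq : ∀ z : Fin n → ℝ, 0 ≤ z ⬝ᵥ P *ᵥ z := fun z => by simpa using hP.posSemidef.dotProduct_mulVec_nonneg z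
  have hxs : ∀ z : Fin n → ℝ, z ≠ 0 → 0 < z ⬝ᵥ P *ᵥ z := fun z hz => by simpa using hP.dotProduct_mulVec_pos hz
  rcases hxy with h | h
  · exact add_pos_of_pos_of_nonneg (hxs x h) (hxq y)
  · exact add_pos_of_nonneg_of_pos (hxq x) (hxs y h)

end helpers

/-- A real square matrix is Hurwitz if every complex eigenvalue has strictly
negative real part. -/
def IsHurwitz {n : ℕ} (A : Matrix (Fin n) (Fin n) ℝ) : Prop :=
  ∀ μ ∈ spectrum ℂ (A.map Complex.ofReal), μ.re < 0

/-- Sufficient condition for the reduced Jacobian to be Hurwitz: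
if each load function has nonpositive derivative at a positive solution `E_L` of the
reduced power flow equation and `[E_L]⁻²[Q_L(E_L)] - B_red` is positive definite
(i.e. `B_red ≺ [E_L]⁻²[Q_L(E_L)]`), then the reduced Jacobian
`J_red(E_L) = (∂Q_L/∂E_L)(E_L) + [E_L]B_red + [B_red(E_L - E_L*)]` is Hurwitz. -/
theorem reduced_jacobian_hurwitz {n : ℕ} (hn : 0 < n)
    (Bred : Matrix (Fin n) (Fin n) ℝ) (hsym : Bred.IsSymm)
    (ELstar : Fin n → ℝ) (Q : Fin n → ℝ → ℝ)
    (EL : Fin n → ℝ) (hEL : ∀ i, 0 < EL i)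
    (hdiff : ∀ i, DifferentiableAt ℝ (Q i) (EL i))
    (hderiv : ∀ i, deriv (Q i) (EL i) ≤ 0)
    (hsol : (0 : Fin n → ℝ) = (fun i => Q i (EL i)) +
      (Matrix.diagonal EL).mulVec (Bred.mulVec (EL - ELstar)))
    (hpd : (Matrix.diagonal (fun i => Q i (EL i) / (EL i) ^ 2) - Bred).PosDef) :
    IsHurwitz (Matrix.diagonal (fun i => deriv (Q i) (EL i)) +
      Matrix.diagonal EL * Bred + Matrix.diagonal (Bred.mulVec (EL - ELstar))) := by
  set q : Fin n → ℝ := fun i => Q i (EL i) with hq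
  set d : Fin n → ℝ := fun i => deriv (Q i) (EL i) with hd
  set Bv : Fin n → ℝ := Bred *ᵥ (EL - ELstar) with hBvdef
  have hELne : ∀ i, EL i ≠ 0 := fun i => (hEL i).ne'
  have hBv : ∀ i, Bv i = -(q i) / EL i := by
    intro i
    have h0 := congrFun hsol i
    simp only [Pi.zero_apply, Pi.add_apply, Matrix.mulVec_diagonal] at h0
    rw [eq_div_iff (hELne i)]
    linarith [mul_comm (Bv i) (EL i)]
  set N : Matrix (Fin n) (Fin n) ℝ :=
    Matrix.diagonal (fun i => q i / (EL i) ^ 2 - d i / EL i) - Bred with hNdef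
  have hNpd : N.PosDef := by
    have : N = (Matrix.diagonal (fun i => q i / (EL i) ^ 2) - Bred) +
        Matrix.diagonal (fun i => -(d i) / EL i) := by
      rw [hNdef]
      ext i j
      by_cases h : i = j
      · subst h
        simp only [Matrix.sub_apply, Matrix.add_apply, Matrix.diagonal_apply_eq]
        ring
      · simp [Matrix.diagonal_apply_ne _ h]
    rw [this]
    exact hpd.add_posSemidef (Matrix.posSemidef_diagonal_iff.mpr fun i =>
      div_nonneg (neg_nonneg.mpr (hderiv i)) (hEL i).le)
  set J : Matrix (Fin n) (Fin n) ℝ :=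
    Matrix.diagonal d + Matrix.diagonal EL * Bred + Matrix.diagonal Bv with hJdef
  set W : Matrix (Fin n) (Fin n) ℝ := Matrix.diagonal (fun i => (EL i)⁻¹) with hWdef
  have hWpd : W.PosDef :=
    Matrix.posDef_diagonal_iff.mpr fun i => inv_pos.mpr (hEL i)
  have hWJ : W * J = -N := by
    rw [hWdef, hJdef, mul_add, mul_add, ← mul_assoc,
      Matrix.diagonal_mul_diagonal, Matrix.diagonal_mul_diagonal,
      Matrix.diagonal_mul_diagonal]
    have h1 : (fun i => (EL i)⁻¹ * EL i) = fun _ => (1 : ℝ) := by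
      funext i; exact inv_mul_cancel₀ (hELne i)
    rw [h1, Matrix.diagonal_one, one_mul, hNdef, neg_sub]
    ext i j
    by_cases h : i = j
    · subst h
      simp only [Matrix.sub_apply, Matrix.add_apply, Matrix.diagonal_apply_eq, hBv i]
      field_simp [hELne i]
      ring
    · simp [Matrix.diagonal_apply_ne _ h]
  intro μ hμ
  rw [← AlgEquiv.spectrum_eq (Matrix.toLinAlgEquiv' (R := ℂ) (n := Fin n)),
    ← Module.End.hasEigenvalue_iff_mem_spectrum] at hμ
  obtain ⟨v, hv1, hv0⟩ := hμ.exists_hasEigenvector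
  have heig : (J.map Complex.ofReal) *ᵥ v = μ • v := by
    have := Module.End.mem_eigenspace_iff.mp hv1
    rwa [Matrix.toLinAlgEquiv'_apply] at this
  have hmul : (W.map Complex.ofReal) *ᵥ ((J.map Complex.ofReal) *ᵥ v) =
      -((N.map Complex.ofReal) *ᵥ v) := by
    rw [Matrix.mulVec_mulVec]
    have hmm : (W.map Complex.ofReal) * (J.map Complex.ofReal) =
        (W * J).map Complex.ofReal := by
      ext i j
      simp [Matrix.map_apply, Matrix.mul_apply]
    rw [hmm, hWJ]
    have : (-N).map Complex.ofReal = -(N.map Complex.ofReal) := by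
      ext i j; simp [Matrix.map_apply]
    rw [this, Matrix.neg_mulVec]
  rw [heig, Matrix.mulVec_smul] at hmul
  have hkey : μ * (star v ⬝ᵥ (W.map Complex.ofReal) *ᵥ v) =
      -(star v ⬝ᵥ (N.map Complex.ofReal) *ᵥ v) := by
    rw [← dotProduct_neg, ← hmul, dotProduct_smul, smul_eq_mul]
  have ha : 0 < star v ⬝ᵥ (W.map Complex.ofReal) *ᵥ v :=
    (posDef_map_ofReal hWpd).dotProduct_mulVec_pos hv0
  have hb : 0 < star v ⬝ᵥ (N.map Complex.ofReal) *ᵥ v :=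
    (posDef_map_ofReal hNpd).dotProduct_mulVec_pos hv0
  rw [Complex.lt_def] at ha hb
  set a := star v ⬝ᵥ (W.map Complex.ofReal) *ᵥ v
  set b := star v ⬝ᵥ (N.map Complex.ofReal) *ᵥ v
  have hre := congrArg Complex.re hkey
  have ha2 : a.im = 0 := by simpa using ha.2.symm
  have ha1 : 0 < a.re := by simpa using ha.1
  have hb1 : 0 < b.re := by simpa using hb.1
  simp only [Complex.mul_re, Complex.neg_re, ha2, mul_zero, sub_zero] at hre
  nlinarith
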